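/- arXiv:1307.3455 — 5 statements merged into one kernel-verified Lean document; each statement's English description precedes it below -/
import Mathlib

section
/- Let q, p ∈ (1, ∞) with conjugate exponents q' = q/(q−1) and p' = p/(p−1). In the abstract Girsanov setting, for every X ∈ L^{qp}(P) and every Y ∈ L^{q'}(P), the quantity E[X·ρ·(Y∘τ)] is well defined (the integrand is integrable) and satisfies |E[X·ρ·(Y∘τ)]| ≤ ‖X‖_{L^{qp}(P)} · ‖ρ‖_{L^{p'}(P)}^{1/q} · ‖Y‖_{L^{q'}(P)}. -/
open MeasureTheory
open scoped ENNReal NNReal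

/-- Hölder inequality phrased with `eLpNorm.toReal`. -/
lemma holder_toReal {α : Type*} [MeasurableSpace α] {μ : Measure α} {p q : ℝ}
    (hpq : Real.HolderConjugate p q) {f g : α → ℝ}
    (hf : MemLp f (ENNReal.ofReal p) μ) (hg : MemLp g (ENNReal.ofReal q) μ) :
    ∫ a, ‖f a‖ * ‖g a‖ ∂μ ≤
      (eLpNorm f (ENNReal.ofReal p) μ).toReal * (eLpNorm g (ENNReal.ofReal q) μ).toReal := by
  have hp0 : ENNReal.ofReal p ≠ 0 := by
    simp [ENNReal.ofReal_eq_zero, not_le, hpq.pos]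
  have hq0 : ENNReal.ofReal q ≠ 0 := by
    simp [ENNReal.ofReal_eq_zero, not_le, hpq.symm.pos]
  have h1 := hf.eLpNorm_eq_integral_rpow_norm hp0 ENNReal.ofReal_ne_top
  have h2 := hg.eLpNorm_eq_integral_rpow_norm hq0 ENNReal.ofReal_ne_top
  rw [ENNReal.toReal_ofReal hpq.nonneg] at h1
  rw [ENNReal.toReal_ofReal hpq.symm.nonneg] at h2
  rw [h1, h2, ENNReal.toReal_ofReal (by positivity), ENNReal.toReal_ofReal (by positivity),
    ← one_div, ← one_div]
  exact integral_mul_norm_le_Lp_mul_Lq hpq hf hg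

/-- In the abstract Girsanov setting, for `q, p ∈ (1, ∞)`,
`X ∈ L^{qp}(P)` and `Y ∈ L^{q'}(P)`, the integrand `X·ρ·(Y∘τ)` is `P`-integrable and
`|E[X·ρ·(Y∘τ)]| ≤ ‖X‖_{qp} · ‖ρ‖_{p'}^{1/q} · ‖Y‖_{q'}`. -/
theorem girsanov_duality_integrable_and_bound
    {Ω : Type*} [MeasurableSpace Ω] (P : Measure Ω) [IsProbabilityMeasure P]
    (τ : Ω → Ω) (hτ : Measurable τ)
    (ρ : Ω → ℝ) (hρm : Measurable ρ) (hρ0 : 0 ≤ᵐ[P] ρ)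
    (hρLp : ∀ r : ℝ, 1 ≤ r → MemLp ρ (ENNReal.ofReal r) P)
    (hGirsanov : ∀ Y : Ω → ℝ, Integrable Y P →
      ∫ ω, Y (τ ω) * ρ ω ∂P = ∫ ω, Y ω ∂P)
    (q p : ℝ) (hq : 1 < q) (hp : 1 < p)
    (X Y : Ω → ℝ)
    (hX : MemLp X (ENNReal.ofReal (q * p)) P)
    (hY : MemLp Y (ENNReal.ofReal (q / (q - 1))) P) :
    Integrable (fun ω => X ω * ρ ω * Y (τ ω)) P ∧
    |∫ ω, X ω * ρ ω * Y (τ ω) ∂P| ≤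
      (eLpNorm X (ENNReal.ofReal (q * p)) P).toReal *
        ((eLpNorm ρ (ENNReal.ofReal (p / (p - 1))) P).toReal) ^ (1 / q) *
        (eLpNorm Y (ENNReal.ofReal (q / (q - 1))) P).toReal := by
  have hqq' : q.HolderConjugate (q / (q - 1)) :=
    (Real.holderConjugate_iff_eq_conjExponent hq).2 rfl
  have hpp' : p.HolderConjugate (p / (p - 1)) :=
    (Real.holderConjugate_iff_eq_conjExponent hp).2 rfl
  set q' : ℝ := q / (q - 1)
  set p' : ℝ := p / (p - 1)
  have hρLp' : MemLp ρ (ENNReal.ofReal p') P := hρLp p' hpp'.symm.lt.le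
  -- the density measure Q = ρ · P
  set κ : Ω → ℝ≥0 := fun ω => (ρ ω).toNNReal with hκdef
  have hκm : Measurable κ := hρm.real_toNNReal
  set Q : Measure Ω := P.withDensity (fun ω => (κ ω : ℝ≥0∞)) with hQdef
  have hQac : Q ≪ P := withDensity_absolutelyContinuous _ _
  have hρint : Integrable ρ P := by
    have := hρLp 1 le_rfl
    rwa [ENNReal.ofReal_one, memLp_one_iff_integrable] at this
  have hκρ : ∀ᵐ ω ∂P, ((κ ω : ℝ)) = ρ ω := hρ0.mono fun ω h => Real.coe_toNNReal _ h
  have hofρ : ∀ ω, ((κ ω : ℝ≥0∞)) = ENNReal.ofReal (ρ ω) := fun ω => rfl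
  -- Q maps to P under τ
  have hmap : Q.map τ = P := by
    ext s hs
    rw [Measure.map_apply hτ hs, hQdef, withDensity_apply _ (hτ hs)]
    have h1 : ∫⁻ x in τ ⁻¹' s, (κ x : ℝ≥0∞) ∂P
        = ENNReal.ofReal (∫ x in τ ⁻¹' s, ρ x ∂P) := by
      rw [MeasureTheory.ofReal_integral_eq_lintegral_ofReal
        (hρint.restrict) (ae_restrict_of_ae hρ0)]
      exact lintegral_congr fun x => rfl
    have h2 : ∫ x in τ ⁻¹' s, ρ x ∂P = (P s).toReal := by
      have hind : Integrable (s.indicator (fun _ => (1 : ℝ))) P :=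
        (integrable_const (1 : ℝ)).indicator hs
      have hg := hGirsanov _ hind
      have hL : ∫ ω, (s.indicator (fun _ => (1 : ℝ))) (τ ω) * ρ ω ∂P
          = ∫ x in τ ⁻¹' s, ρ x ∂P := by
        rw [← integral_indicator (hτ hs)]
        congr 1
        ext ω
        by_cases h : τ ω ∈ s <;> simp [Set.indicator, h]
      have hR : ∫ ω, (s.indicator (fun _ => (1 : ℝ))) ω ∂P = (P s).toReal := by
        exact integral_indicator_one (μ := P) hs
      rw [hL, hR] at hg
      exact hg
    rw [h1, h2, ENNReal.ofReal_toReal (measure_ne_top P s)]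
  -- Y ∘ τ on Q
  have hYmap : MemLp Y (ENNReal.ofReal q') (Q.map τ) := by rw [hmap]; exact hY
  have hYQ : MemLp (Y ∘ τ) (ENNReal.ofReal q') Q :=
    (memLp_map_measure_iff hYmap.1 hτ.aemeasurable).mp hYmap
  have hYeq : eLpNorm (Y ∘ τ) (ENNReal.ofReal q') Q = eLpNorm Y (ENNReal.ofReal q') P := by
    rw [← eLpNorm_map_measure hYmap.1 hτ.aemeasurable, hmap]
  -- exponent bookkeeping
  have hq0 : ENNReal.ofReal q ≠ 0 := by simp [ENNReal.ofReal_eq_zero, not_le, hqq'.pos]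
  have hqp0 : ENNReal.ofReal (q * p) ≠ 0 := by
    simp [ENNReal.ofReal_eq_zero, not_le, mul_pos hqq'.pos hpp'.pos]
  have hp'0 : ENNReal.ofReal p' ≠ 0 := by simp [ENNReal.ofReal_eq_zero, not_le, hpp'.symm.pos]
  -- key norm bound for X on Q
  have hκfin : ∀ᵐ x ∂P, ((κ x : ℝ≥0∞)) < ⊤ := ae_of_all _ fun x => ENNReal.coe_lt_top
  have key : eLpNorm X (ENNReal.ofReal q) Q ≤
      eLpNorm X (ENNReal.ofReal (q * p)) P *
        (eLpNorm ρ (ENNReal.ofReal p') P) ^ (1 / q) := by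
    rw [eLpNorm_eq_lintegral_rpow_enorm_toReal hq0 ENNReal.ofReal_ne_top,
      ENNReal.toReal_ofReal hqq'.nonneg, hQdef,
      lintegral_withDensity_eq_lintegral_mul_non_measurable _ hκm.coe_nnreal_ennreal hκfin]
    have hXmeas : AEMeasurable (fun a => ((‖X a‖₊ : ℝ≥0∞)) ^ q) P :=
      (hX.1.aemeasurable.nnnorm.coe_nnreal_ennreal).pow_const q
    have hswap : ∫⁻ a, ((fun x => (κ x : ℝ≥0∞)) * fun a => ((‖X a‖₊ : ℝ≥0∞)) ^ q) a ∂P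
        = ∫⁻ a, (fun a => ((‖X a‖₊ : ℝ≥0∞)) ^ q) a * (κ a : ℝ≥0∞) ∂P :=
      lintegral_congr fun a => mul_comm _ _
    have hXnorm : eLpNorm X (ENNReal.ofReal (q * p)) P
        = (∫⁻ a, ((‖X a‖₊ : ℝ≥0∞) ^ q) ^ p ∂P) ^ ((1 / p) * (1 / q)) := by
      rw [eLpNorm_eq_lintegral_rpow_enorm_toReal hqp0 ENNReal.ofReal_ne_top,
        ENNReal.toReal_ofReal (by positivity)]
      congr 1
      · exact lintegral_congr fun a => ENNReal.rpow_mul _ _ _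
      · rw [one_div_mul_one_div, mul_comm]
    have hρnorm : eLpNorm ρ (ENNReal.ofReal p') P
        = (∫⁻ a, ((κ a : ℝ≥0∞)) ^ p' ∂P) ^ (1 / p') := by
      rw [eLpNorm_eq_lintegral_rpow_enorm_toReal hp'0 ENNReal.ofReal_ne_top,
        ENNReal.toReal_ofReal hpp'.symm.nonneg]
      congr 1
      refine lintegral_congr_ae ?_
      filter_upwards [hρ0] with a ha
      rw [Real.enorm_eq_ofReal ha]
      rfl
    calc (∫⁻ a, ((fun x => (κ x : ℝ≥0∞)) * fun a => ((‖X a‖₊ : ℝ≥0∞)) ^ q) a ∂P) ^ (1 / q)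
        = (∫⁻ a, ((‖X a‖₊ : ℝ≥0∞)) ^ q * (κ a : ℝ≥0∞) ∂P) ^ (1 / q) := by
          rw [hswap]
      _ ≤ ((∫⁻ a, ((‖X a‖₊ : ℝ≥0∞) ^ q) ^ p ∂P) ^ (1 / p) *
            (∫⁻ a, ((κ a : ℝ≥0∞)) ^ p' ∂P) ^ (1 / p')) ^ (1 / q) := by
          refine ENNReal.rpow_le_rpow ?_ (by positivity)
          exact ENNReal.lintegral_mul_le_Lp_mul_Lq P hpp' hXmeas
            hκm.coe_nnreal_ennreal.aemeasurable
      _ = eLpNorm X (ENNReal.ofReal (q * p)) P *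
            eLpNorm ρ (ENNReal.ofReal p') P ^ (1 / q) := by
          rw [ENNReal.mul_rpow_of_nonneg _ _ (by positivity), hXnorm, hρnorm,
            ← ENNReal.rpow_mul]
  have hXQ : MemLp X (ENNReal.ofReal q) Q := by
    refine ⟨hX.1.mono_ac hQac, lt_of_le_of_lt key (ENNReal.mul_lt_top ?_ ?_)⟩
    · exact hX.eLpNorm_lt_top
    · exact ENNReal.rpow_lt_top_of_nonneg (by positivity) hρLp'.eLpNorm_ne_top
  -- integrability of the product on Q
  have hconj : (1 : ℝ≥0∞) / 1 = 1 / ENNReal.ofReal q + 1 / ENNReal.ofReal q' := by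
    simp only [one_div]
    rw [inv_one]
    exact hqq'.inv_add_inv_ennreal.symm
  have hprodQ : MemLp (fun ω => X ω * Y (τ ω)) 1 Q := by
    have h0 : MemLp (X • (Y ∘ τ)) 1 Q := MemLp.smul (μ := Q) (hpqr := ⟨by rw [inv_one]; exact hqq'.inv_add_inv_ennreal⟩) hYQ hXQ
    exact h0.ae_eq (Filter.Eventually.of_forall fun ω => rfl)
  have hIntQ : Integrable (fun ω => X ω * Y (τ ω)) Q := memLp_one_iff_integrable.mp hprodQ
  have hIntP : Integrable (fun ω => κ ω • (X ω * Y (τ ω))) P :=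
    (integrable_withDensity_iff_integrable_smul hκm).mp hIntQ
  have hae : (fun ω => κ ω • (X ω * Y (τ ω))) =ᵐ[P] fun ω => X ω * ρ ω * Y (τ ω) := by
    filter_upwards [hκρ] with ω h
    rw [NNReal.smul_def, h, smul_eq_mul]; ring
  have hInt : Integrable (fun ω => X ω * ρ ω * Y (τ ω)) P := hIntP.congr hae
  refine ⟨hInt, ?_⟩
  -- rewrite the integral over P as an integral over Q
  have hIeq : ∫ ω, X ω * ρ ω * Y (τ ω) ∂P = ∫ ω, X ω * Y (τ ω) ∂Q := by
    rw [hQdef, integral_withDensity_eq_integral_smul hκm]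
    exact (integral_congr_ae hae).symm
  rw [hIeq]
  calc |∫ ω, X ω * Y (τ ω) ∂Q| ≤ ∫ ω, ‖X ω‖ * ‖Y (τ ω)‖ ∂Q := by
        rw [← Real.norm_eq_abs]
        refine (norm_integral_le_integral_norm _).trans_eq ?_
        simp [norm_mul]
    _ ≤ (eLpNorm X (ENNReal.ofReal q) Q).toReal *
          (eLpNorm (Y ∘ τ) (ENNReal.ofReal q') Q).toReal := holder_toReal hqq' hXQ hYQ
    _ ≤ (eLpNorm X (ENNReal.ofReal (q * p)) P).toReal *
          ((eLpNorm ρ (ENNReal.ofReal p') P).toReal) ^ (1 / q) *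
          (eLpNorm Y (ENNReal.ofReal q') P).toReal := by
        rw [hYeq]
        refine mul_le_mul_of_nonneg_right ?_ ENNReal.toReal_nonneg
        rw [ENNReal.toReal_rpow, ← ENNReal.toReal_mul]
        refine ENNReal.toReal_mono ?_ key
        exact ENNReal.mul_ne_top hX.eLpNorm_ne_top
          (ENNReal.rpow_lt_top_of_nonneg (by positivity) hρLp'.eLpNorm_ne_top).ne
end

section
/- Let q, p ∈ (1, ∞) with conjugate exponents q', p'. In the abstract Girsanov setting, the map X ↦ Z(X) is linear on L^{qp}(P): Z(aX + X') = a·Z(X) + Z(X') in L^q(P) for all a ∈ ℝ and X, X' ∈ L^{qp}(P); moreover it is continuous, with ‖Z(X)‖_{L^q(P)} ≤ ‖ρ‖_{L^{p'}(P)}^{1/q} · ‖X‖_{L^{qp}(P)} for every X ∈ L^{qp}(P). -/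
open MeasureTheory
open scoped ENNReal NNReal

private lemma measurable_realSign : Measurable Real.sign := by
  have : Real.sign = fun r : ℝ => if r < 0 then (-1 : ℝ) else if 0 < r then 1 else 0 := by
    funext r; rfl
  rw [this]
  exact Measurable.ite measurableSet_Iio measurable_const
    (Measurable.ite measurableSet_Ioi measurable_const measurable_const)

private lemma ofReal_norm_eq_coe_nnnorm (a : ℝ) :
    ENNReal.ofReal ‖a‖ = (‖a‖₊ : ℝ≥0∞) := ofReal_norm a

private lemma ofReal_integral_le_lintegral_nnnorm {α : Type*} [MeasurableSpace α]
    {μ : Measure α} (f : α → ℝ) :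
    ENNReal.ofReal (∫ a, f a ∂μ) ≤ ∫⁻ a, (‖f a‖₊ : ℝ≥0∞) ∂μ := by
  by_cases hf : Integrable f μ
  · calc ENNReal.ofReal (∫ a, f a ∂μ) ≤ ENNReal.ofReal (∫ a, ‖f a‖ ∂μ) := by
          refine ENNReal.ofReal_le_ofReal ?_
          exact le_trans (le_abs_self _) (by rw [← Real.norm_eq_abs]; exact norm_integral_le_integral_norm f)
      _ = ∫⁻ a, (‖f a‖₊ : ℝ≥0∞) ∂μ := ofReal_integral_norm_eq_lintegral_enorm hf
  · rw [integral_undef hf]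
    simp

private lemma girsanov_lintegral_le {Ω : Type*} [MeasurableSpace Ω] (P : Measure Ω)
    [IsProbabilityMeasure P] (τ : Ω → Ω) (hτ : Measurable τ)
    (ρ : Ω → ℝ) (hρm : Measurable ρ) (hρ0 : 0 ≤ᵐ[P] ρ) (hρint : Integrable ρ P)
    (hGirsanov : ∀ Y : Ω → ℝ, Integrable Y P → ∫ ω, Y (τ ω) * ρ ω ∂P = ∫ ω, Y ω ∂P)
    (B : Ω → ℝ) (hBm : Measurable B) (hB0 : ∀ ω, 0 ≤ B ω) (hBint : Integrable B P) :
    ∫⁻ ω, (‖ρ ω‖₊ : ℝ≥0∞) * ENNReal.ofReal (B (τ ω)) ∂P ≤ ENNReal.ofReal (∫ ω, B ω ∂P) := by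
  have key : ∀ N : ℕ, ∫⁻ ω, (‖ρ ω‖₊ : ℝ≥0∞) * ENNReal.ofReal (min (B (τ ω)) N) ∂P ≤
      ENNReal.ofReal (∫ ω, B ω ∂P) := by
    intro N
    have hBNint : Integrable (fun ω => min (B ω) (N : ℝ)) P := by
      refine hBint.mono' (hBm.min measurable_const).aestronglyMeasurable ?_
      filter_upwards with ω
      rw [Real.norm_eq_abs, abs_of_nonneg (le_min (hB0 ω) (Nat.cast_nonneg N))]
      exact min_le_left _ _
    have hGir := hGirsanov _ hBNint
    have hprod : Integrable (fun ω => min (B (τ ω)) (N : ℝ) * ρ ω) P := by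
      refine hρint.bdd_mul (((hBm.comp hτ).min measurable_const).aestronglyMeasurable)
        (c := N) ?_
      filter_upwards with ω
      rw [Real.norm_eq_abs, abs_of_nonneg (le_min (hB0 _) (Nat.cast_nonneg N))]
      exact min_le_right _ _
    have heq : ∫⁻ ω, (‖ρ ω‖₊ : ℝ≥0∞) * ENNReal.ofReal (min (B (τ ω)) N) ∂P =
        ENNReal.ofReal (∫ ω, min (B (τ ω)) (N : ℝ) * ρ ω ∂P) := by
      rw [ofReal_integral_eq_lintegral_ofReal hprod ?_]
      · refine lintegral_congr_ae ?_
        filter_upwards [hρ0] with ω hω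
        rw [ENNReal.ofReal_mul (le_min (hB0 _) (Nat.cast_nonneg N)), mul_comm]
        congr 1
        rw [← ofReal_norm_eq_coe_nnnorm, Real.norm_eq_abs, abs_of_nonneg hω]
      · filter_upwards [hρ0] with ω hω
        exact mul_nonneg (le_min (hB0 _) (Nat.cast_nonneg N)) hω
    rw [heq, hGir]
    exact ENNReal.ofReal_le_ofReal (integral_mono hBNint hBint fun ω => min_le_left _ _)
  have hmono : ∫⁻ ω, (‖ρ ω‖₊ : ℝ≥0∞) * ENNReal.ofReal (B (τ ω)) ∂P =
      ⨆ N : ℕ, ∫⁻ ω, (‖ρ ω‖₊ : ℝ≥0∞) * ENNReal.ofReal (min (B (τ ω)) N) ∂P := by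
    rw [← lintegral_iSup]
    · refine lintegral_congr fun ω => ?_
      rw [← ENNReal.mul_iSup]
      congr 1
      refine le_antisymm ?_ (iSup_le fun N => ENNReal.ofReal_le_ofReal (min_le_left _ _))
      refine le_iSup_of_le ⌈B (τ ω)⌉₊ (le_of_eq ?_)
      rw [min_eq_left (Nat.le_ceil _)]
    · intro N
      exact (hρm.nnnorm.coe_nnreal_ennreal).mul
        (ENNReal.measurable_ofReal.comp ((hBm.comp hτ).min measurable_const))
    · intro m n hmn
      refine fun ω => mul_le_mul_right (ENNReal.ofReal_le_ofReal ?_) _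
      exact min_le_min le_rfl (Nat.cast_le.mpr hmn)
  rw [hmono]
  exact iSup_le key


/-- In the abstract Girsanov setting, the operator `Z` is linear on
`L^{qp}(P)`: if `ZX`, `ZX'` and `ZaXX'` satisfy the duality identity for `X`, `X'`
and `a·X + X'` respectively, then `ZaXX' = a·ZX + ZX'` `P`-a.e.; moreover `Z` is
continuous, with `‖Z(X)‖_{L^q} ≤ ‖ρ‖_{L^{p'}}^{1/q} · ‖X‖_{L^{qp}}`. -/
theorem girsanov_operator_linear_continuous
    {Ω : Type*} [MeasurableSpace Ω] (P : Measure Ω) [IsProbabilityMeasure P]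
    (τ : Ω → Ω) (hτ : Measurable τ)
    (ρ : Ω → ℝ) (hρm : Measurable ρ) (hρ0 : 0 ≤ᵐ[P] ρ)
    (hρLp : ∀ r : ℝ, 1 ≤ r → MemLp ρ (ENNReal.ofReal r) P)
    (hGirsanov : ∀ Y : Ω → ℝ, Integrable Y P →
      ∫ ω, Y (τ ω) * ρ ω ∂P = ∫ ω, Y ω ∂P)
    (q p : ℝ) (hq : 1 < q) (hp : 1 < p)
    (a : ℝ) (X X' : Ω → ℝ)
    (hX : MemLp X (ENNReal.ofReal (q * p)) P)
    (hX' : MemLp X' (ENNReal.ofReal (q * p)) P)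
    (ZX ZX' ZaXX' : Ω → ℝ)
    (hZX : MemLp ZX (ENNReal.ofReal q) P)
    (hZX' : MemLp ZX' (ENNReal.ofReal q) P)
    (hZaXX' : MemLp ZaXX' (ENNReal.ofReal q) P)
    (hZXdual : ∀ Y : Ω → ℝ, MemLp Y (ENNReal.ofReal (q / (q - 1))) P →
      ∫ ω, ZX ω * Y ω ∂P = ∫ ω, X ω * ρ ω * Y (τ ω) ∂P)
    (hZX'dual : ∀ Y : Ω → ℝ, MemLp Y (ENNReal.ofReal (q / (q - 1))) P →
      ∫ ω, ZX' ω * Y ω ∂P = ∫ ω, X' ω * ρ ω * Y (τ ω) ∂P)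
    (hZaXX'dual : ∀ Y : Ω → ℝ, MemLp Y (ENNReal.ofReal (q / (q - 1))) P →
      ∫ ω, ZaXX' ω * Y ω ∂P = ∫ ω, (a * X ω + X' ω) * ρ ω * Y (τ ω) ∂P) :
    ZaXX' =ᵐ[P] (fun ω => a * ZX ω + ZX' ω) ∧
    (eLpNorm ZX (ENNReal.ofReal q) P).toReal ≤
      ((eLpNorm ρ (ENNReal.ofReal (p / (p - 1))) P).toReal) ^ (1 / q) *
        (eLpNorm X (ENNReal.ofReal (q * p)) P).toReal := by
  constructor
  · have hq0 : (0:ℝ) < q := one_pos.trans hq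
    have hp0 : (0:ℝ) < p := one_pos.trans hp
    have hqp1 : 1 < q * p := by nlinarith
    have hQ1 : (1 : ℝ≥0∞) ≤ ENNReal.ofReal q := by
      rw [← ENNReal.ofReal_one]; exact ENNReal.ofReal_le_ofReal hq.le
    have hZXint : Integrable ZX P := hZX.integrable hQ1
    have hZX'int : Integrable ZX' P := hZX'.integrable hQ1
    have hZaXX'int : Integrable ZaXX' P := hZaXX'.integrable hQ1
    -- Integrability of V * ρ for V ∈ L^{qp}
    have hVρ : ∀ V : Ω → ℝ, MemLp V (ENNReal.ofReal (q * p)) P →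
        Integrable (fun ω => V ω * ρ ω) P := by
      intro V hV
      have hc : (q * p).HolderConjugate ((q * p) / (q * p - 1)) :=
        Real.HolderConjugate.conjExponent hqp1
      have hs1 : (1:ℝ) ≤ (q * p) / (q * p - 1) := hc.symm.lt.le
      have hexp : (1 : ℝ≥0∞) / 1 =
          1 / ENNReal.ofReal ((q * p) / (q * p - 1)) + 1 / ENNReal.ofReal (q * p) := by
        simp only [one_div, inv_one]
        exact ((add_comm _ _).trans hc.inv_add_inv_ennreal).symm
      have := (hV.smul (hρLp _ hs1) (hpqr := ⟨by simpa only [one_div, inv_one] using hexp.symm⟩) : MemLp (ρ • V) 1 P)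
      refine (memLp_one_iff_integrable.mp this).congr ?_
      filter_upwards with ω
      simp [mul_comm]
    have hW : Integrable (fun ω => ZaXX' ω - (a * ZX ω + ZX' ω)) P :=
      hZaXX'int.sub ((hZXint.const_mul a).add hZX'int)
    have key : ∀ s : Set Ω, MeasurableSet s →
        ∫ ω in s, (ZaXX' ω - (a * ZX ω + ZX' ω)) ∂P = 0 := by
      intro s hs
      set Y : Ω → ℝ := s.indicator (fun _ => 1) with hYdef
      have hYmem : MemLp Y (ENNReal.ofReal (q / (q - 1))) P :=
        memLp_indicator_const _ hs 1 (Or.inr (measure_ne_top P s))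
      have hYb : ∀ ω, ‖Y ω‖ ≤ 1 := by
        intro ω
        by_cases hω : ω ∈ s <;> simp [hYdef, Set.indicator_of_mem, Set.indicator_of_notMem, hω]
      have hYτm : AEStronglyMeasurable (fun ω => Y (τ ω)) P :=
        ((measurable_const.indicator hs).comp hτ).aestronglyMeasurable
      have hVρY : ∀ V : Ω → ℝ, MemLp V (ENNReal.ofReal (q * p)) P →
          Integrable (fun ω => V ω * ρ ω * Y (τ ω)) P := by
        intro V hV
        refine (((hVρ V hV).bdd_mul (c := 1) hYτm ?_).congr ?_)
        · filter_upwards with ω; exact hYb _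
        · filter_upwards with ω; ring
      have e1 := hZaXX'dual Y hYmem
      have e2 := hZXdual Y hYmem
      have e3 := hZX'dual Y hYmem
      have eadd : ∫ ω, (a * X ω + X' ω) * ρ ω * Y (τ ω) ∂P
          = a * ∫ ω, X ω * ρ ω * Y (τ ω) ∂P + ∫ ω, X' ω * ρ ω * Y (τ ω) ∂P := by
        have hsplit : (fun ω => (a * X ω + X' ω) * ρ ω * Y (τ ω)) =
            fun ω => a * (X ω * ρ ω * Y (τ ω)) + X' ω * ρ ω * Y (τ ω) := by
          funext ω; ring
        rw [hsplit, integral_add ((hVρY X hX).const_mul a) (hVρY X' hX'),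
          integral_const_mul]
      have iZ : ∀ V : Ω → ℝ, Integrable V P →
          ∫ ω, V ω * Y ω ∂P = ∫ ω in s, V ω ∂P := by
        intro V hV
        rw [← integral_indicator hs]
        refine integral_congr_ae ?_
        filter_upwards with ω
        by_cases hω : ω ∈ s <;>
          simp [hYdef, Set.indicator_of_mem, Set.indicator_of_notMem, hω]
      have h1 : ∫ ω in s, ZaXX' ω ∂P =
          a * ∫ ω in s, ZX ω ∂P + ∫ ω in s, ZX' ω ∂P := by
        rw [← iZ _ hZaXX'int, ← iZ _ hZXint, ← iZ _ hZX'int, e1, e2, e3, eadd]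
      have hsum : Integrable (fun ω => a * ZX ω + ZX' ω) P :=
        (hZXint.const_mul a).add hZX'int
      rw [integral_sub hZaXX'int.integrableOn hsum.integrableOn,
        integral_add (hZXint.const_mul a).integrableOn hZX'int.integrableOn,
        integral_const_mul, h1]
      ring
    have hW0 := hW.ae_eq_zero_of_forall_setIntegral_eq_zero (fun s hs _ => key s hs)
    filter_upwards [hW0] with ω hω
    have : ZaXX' ω - (a * ZX ω + ZX' ω) = 0 := hω
    linarith

  · have hq0 : (0:ℝ) < q := one_pos.trans hq
    have hp0 : (0:ℝ) < p := one_pos.trans hp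
    have hq1 : (0:ℝ) < q - 1 := sub_pos.2 hq
    have hqc : q.HolderConjugate (q / (q - 1)) := by
      have := Real.HolderConjugate.conjExponent hq
      rwa [Real.conjExponent] at this
    have hpc : p.HolderConjugate (p / (p - 1)) := by
      have := Real.HolderConjugate.conjExponent hp
      rwa [Real.conjExponent] at this
    set q' : ℝ := q / (q - 1) with hq'def
    set p' : ℝ := p / (p - 1) with hp'def
    have hq'0 : 0 < q' := hqc.symm.pos
    have hp'1 : 1 < p' := hpc.symm.lt
    have hρint : Integrable ρ P := by
      have h := hρLp 1 le_rfl
      rw [ENNReal.ofReal_one] at h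
      exact h.integrable le_rfl
    -- measurable representative of ZX
    set Z0 : Ω → ℝ := hZX.1.mk ZX with hZ0def
    have hZ0m : StronglyMeasurable Z0 := hZX.1.stronglyMeasurable_mk
    have hZ0meas : Measurable Z0 := hZ0m.measurable
    have hZae : ZX =ᵐ[P] Z0 := hZX.1.ae_eq_mk
    have hZ0mem : MemLp Z0 (ENNReal.ofReal q) P := hZX.ae_eq hZae
    -- the dual test function
    set Y : Ω → ℝ := fun ω => |Z0 ω| ^ (q - 1) * Real.sign (Z0 ω) with hYdef
    have hYmeas : Measurable Y :=
      (hZ0meas.abs.pow_const (q - 1)).mul (measurable_realSign.comp hZ0meas)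
    have habsY : ∀ ω, |Y ω| = |Z0 ω| ^ (q - 1) := by
      intro ω
      rcases eq_or_ne (Z0 ω) 0 with h | h
      · simp [hYdef, h, Real.sign_zero, Real.zero_rpow hq1.ne']
      · rw [hYdef, abs_mul, abs_of_nonneg (Real.rpow_nonneg (abs_nonneg _) _)]
        rcases Real.sign_apply_eq_of_ne_zero _ h with hs | hs <;> rw [hs] <;> simp
    have habspow : ∀ x : ℝ, |x| ^ (q - 1) * |x| = |x| ^ q := by
      intro x
      rcases eq_or_ne x 0 with h | h
      · simp [h, Real.zero_rpow hq1.ne', Real.zero_rpow hq0.ne']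
      · calc |x| ^ (q - 1) * |x| = |x| ^ (q - 1) * |x| ^ (1:ℝ) := by rw [Real.rpow_one]
          _ = |x| ^ (q - 1 + 1) := (Real.rpow_add (abs_pos.2 h) _ _).symm
          _ = |x| ^ q := by ring_nf
    have hZY : ∀ ω, Z0 ω * Y ω = |Z0 ω| ^ q := by
      intro ω
      have h1 : Z0 ω * Y ω = |Z0 ω| ^ (q - 1) * (Z0 ω * Real.sign (Z0 ω)) := by
        rw [hYdef]; ring
      rcases lt_trichotomy (Z0 ω) 0 with h | h | h
      · rw [h1, Real.sign_of_neg h]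
        have h2 : Z0 ω * (-1) = |Z0 ω| := by rw [abs_of_neg h]; ring
        rw [h2, habspow]
      · rw [h1, h]
        simp [Real.sign_zero, Real.zero_rpow hq0.ne']
      · rw [h1, Real.sign_of_pos h]
        have h2 : Z0 ω * 1 = |Z0 ω| := by rw [abs_of_pos h]; ring
        rw [h2, habspow]
    have hYmem : MemLp Y (ENNReal.ofReal q') P := by
      have h1 := hZ0mem.norm_rpow_div (ENNReal.ofReal (q - 1))
      rw [ENNReal.toReal_ofReal hq1.le] at h1
      have hdiv : ENNReal.ofReal q / ENNReal.ofReal (q - 1) = ENNReal.ofReal q' := by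
        rw [hq'def, ENNReal.ofReal_div_of_pos hq1]
      rw [hdiv] at h1
      refine h1.of_le hYmeas.aestronglyMeasurable ?_
      filter_upwards with ω
      rw [Real.norm_eq_abs, Real.norm_eq_abs, habsY ω, Real.norm_eq_abs,
        abs_of_nonneg (Real.rpow_nonneg (abs_nonneg _) _)]
    set A : ℝ := ∫ ω, |Z0 ω| ^ q ∂P with hAdef
    have hIq : Integrable (fun ω => |Z0 ω| ^ q) P := by
      have h := hZ0mem.integrable_norm_rpow
        (by simp [ENNReal.ofReal_eq_zero, not_le, hq0]) ENNReal.ofReal_ne_top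
      rw [ENNReal.toReal_ofReal hq0.le] at h
      simpa [Real.norm_eq_abs] using h
    have hAeq : A = ∫ ω, X ω * ρ ω * Y (τ ω) ∂P := by
      rw [← hZXdual Y hYmem, hAdef]
      refine integral_congr_ae ?_
      filter_upwards [hZae] with ω hω
      rw [hω]
      exact (hZY ω).symm
    set N : ℝ≥0∞ := eLpNorm ZX (ENNReal.ofReal q) P with hNdef
    set M : ℝ≥0∞ := eLpNorm X (ENNReal.ofReal (q * p)) P with hMdef
    set R : ℝ≥0∞ := eLpNorm ρ (ENNReal.ofReal p') P with hRdef
    have hNne : N ≠ ⊤ := hZX.2.ne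
    have hMne : M ≠ ⊤ := hX.2.ne
    have hRne : R ≠ ⊤ := (hρLp p' hp'1.le).2.ne
    have hlp : ∀ (f : Ω → ℝ) (r : ℝ), 0 < r →
        (eLpNorm f (ENNReal.ofReal r) P) ^ r = ∫⁻ ω, (‖f ω‖₊ : ℝ≥0∞) ^ r ∂P := by
      intro f r hr
      rw [eLpNorm_eq_lintegral_rpow_enorm_toReal
          (by simp [ENNReal.ofReal_eq_zero, not_le, hr]) ENNReal.ofReal_ne_top,
        ENNReal.toReal_ofReal hr.le, one_div, ← ENNReal.rpow_mul,
        inv_mul_cancel₀ hr.ne', ENNReal.rpow_one]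
      rfl
    have hNq : N ^ q = ENNReal.ofReal A := by
      rw [hNdef, eLpNorm_congr_ae hZae, hlp Z0 q hq0, hAdef,
        ofReal_integral_eq_lintegral_ofReal hIq
          (Filter.Eventually.of_forall fun ω => Real.rpow_nonneg (abs_nonneg _) _)]
      refine lintegral_congr fun ω => ?_
      rw [← ofReal_norm_eq_coe_nnnorm, Real.norm_eq_abs,
        ENNReal.ofReal_rpow_of_nonneg (abs_nonneg _) hq0.le]
    have hMq : ∫⁻ ω, (‖X ω‖₊ : ℝ≥0∞) ^ (q * p) ∂P = M ^ (q * p) :=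
      (hlp X _ (by positivity)).symm
    have hRq : ∫⁻ ω, (‖ρ ω‖₊ : ℝ≥0∞) ^ p' ∂P = R ^ p' :=
      (hlp ρ _ (one_pos.trans hp'1)).symm
    have hXm : AEMeasurable X P := hX.1.aemeasurable
    set F : ℝ≥0∞ := ∫⁻ ω, (‖X ω‖₊ : ℝ≥0∞) ^ q * (‖ρ ω‖₊ : ℝ≥0∞) ∂P with hFdef
    set G : ℝ≥0∞ := ∫⁻ ω, (‖ρ ω‖₊ : ℝ≥0∞) * (‖Y (τ ω)‖₊ : ℝ≥0∞) ^ q' ∂P with hGdef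
    have L1 : ENNReal.ofReal A ≤
        ∫⁻ ω, (‖X ω‖₊ : ℝ≥0∞) * (‖ρ ω‖₊ : ℝ≥0∞) * (‖Y (τ ω)‖₊ : ℝ≥0∞) ∂P := by
      rw [hAeq]
      refine le_trans (ofReal_integral_le_lintegral_nnnorm _) (le_of_eq ?_)
      refine lintegral_congr fun ω => ?_
      rw [nnnorm_mul, nnnorm_mul]
      push_cast
      ring
    have L2 : ∫⁻ ω, (‖X ω‖₊ : ℝ≥0∞) * (‖ρ ω‖₊ : ℝ≥0∞) * (‖Y (τ ω)‖₊ : ℝ≥0∞) ∂P ≤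
        F ^ (1/q) * G ^ (1/q') := by
      have hf : AEMeasurable (fun ω => (‖X ω‖₊ : ℝ≥0∞) * (‖ρ ω‖₊ : ℝ≥0∞) ^ (1/q)) P :=
        hXm.enorm.mul ((hρm.enorm.pow_const (1/q)).aemeasurable)
      have hg : AEMeasurable (fun ω => (‖ρ ω‖₊ : ℝ≥0∞) ^ (1/q') * (‖Y (τ ω)‖₊ : ℝ≥0∞)) P :=
        ((hρm.enorm.pow_const (1/q')).mul
          ((hYmeas.comp hτ).enorm)).aemeasurable
      calc ∫⁻ ω, (‖X ω‖₊ : ℝ≥0∞) * (‖ρ ω‖₊ : ℝ≥0∞) * (‖Y (τ ω)‖₊ : ℝ≥0∞) ∂P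
          = ∫⁻ ω, ((fun ω => (‖X ω‖₊ : ℝ≥0∞) * (‖ρ ω‖₊ : ℝ≥0∞) ^ (1/q)) *
              (fun ω => (‖ρ ω‖₊ : ℝ≥0∞) ^ (1/q') * (‖Y (τ ω)‖₊ : ℝ≥0∞))) ω ∂P := by
            refine lintegral_congr fun ω => ?_
            simp only [Pi.mul_apply]
            rw [show (‖X ω‖₊ : ℝ≥0∞) * (‖ρ ω‖₊ : ℝ≥0∞) ^ (1/q) *
                ((‖ρ ω‖₊ : ℝ≥0∞) ^ (1/q') * (‖Y (τ ω)‖₊ : ℝ≥0∞))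
                = (‖X ω‖₊ : ℝ≥0∞) * ((‖ρ ω‖₊ : ℝ≥0∞) ^ (1/q) * (‖ρ ω‖₊ : ℝ≥0∞) ^ (1/q')) *
                  (‖Y (τ ω)‖₊ : ℝ≥0∞) from by ring]
            rw [← ENNReal.rpow_add_of_nonneg _ _ (by positivity) (by positivity),
              show 1/q + 1/q' = 1 from by
                rw [one_div, one_div]; exact hqc.inv_add_inv_eq_one,
              ENNReal.rpow_one]
        _ ≤ (∫⁻ ω, (fun ω => (‖X ω‖₊ : ℝ≥0∞) * (‖ρ ω‖₊ : ℝ≥0∞) ^ (1/q)) ω ^ q ∂P) ^ (1/q) *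
            (∫⁻ ω, (fun ω => (‖ρ ω‖₊ : ℝ≥0∞) ^ (1/q') * (‖Y (τ ω)‖₊ : ℝ≥0∞)) ω ^ q' ∂P) ^ (1/q') :=
            ENNReal.lintegral_mul_le_Lp_mul_Lq P hqc hf hg
        _ = F ^ (1/q) * G ^ (1/q') := by
            congr 1
            · congr 1
              refine lintegral_congr fun ω => ?_
              rw [ENNReal.mul_rpow_of_nonneg _ _ hq0.le, ← ENNReal.rpow_mul,
                one_div, inv_mul_cancel₀ hq0.ne', ENNReal.rpow_one]
            · congr 1
              refine lintegral_congr fun ω => ?_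
              rw [ENNReal.mul_rpow_of_nonneg _ _ hq'0.le, ← ENNReal.rpow_mul,
                one_div, inv_mul_cancel₀ hq'0.ne', ENNReal.rpow_one]
    have L3 : F ≤ M ^ q * R := by
      have hf : AEMeasurable (fun ω => (‖X ω‖₊ : ℝ≥0∞) ^ q) P :=
        hXm.enorm.pow_const q
      calc F = ∫⁻ ω, ((fun ω => (‖X ω‖₊ : ℝ≥0∞) ^ q) * fun ω => (‖ρ ω‖₊ : ℝ≥0∞)) ω ∂P :=
            lintegral_congr fun ω => rfl
        _ ≤ (∫⁻ ω, ((‖X ω‖₊ : ℝ≥0∞) ^ q) ^ p ∂P) ^ (1/p) *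
            (∫⁻ ω, (‖ρ ω‖₊ : ℝ≥0∞) ^ p' ∂P) ^ (1/p') :=
            ENNReal.lintegral_mul_le_Lp_mul_Lq P hpc hf hρm.enorm.aemeasurable
        _ = M ^ q * R := by
            rw [hRq]
            have h1 : ∫⁻ ω, ((‖X ω‖₊ : ℝ≥0∞) ^ q) ^ p ∂P = M ^ (q * p) := by
              rw [← hMq]
              exact lintegral_congr fun ω => (ENNReal.rpow_mul _ _ _).symm
            rw [h1, ← ENNReal.rpow_mul, ← ENNReal.rpow_mul]
            rw [show q * p * (1/p) = q from by field_simp, show p' * (1/p') = 1 from by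
              field_simp, ENNReal.rpow_one]
    have L4 : G ≤ ENNReal.ofReal A := by
      have hYq' : ∀ x, |Y x| ^ q' = |Z0 x| ^ q := by
        intro x
        rw [habsY, ← Real.rpow_mul (abs_nonneg _), hqc.sub_one_mul_conj]
      have hGeq : G = ∫⁻ ω, (‖ρ ω‖₊ : ℝ≥0∞) *
          ENNReal.ofReal ((fun ω => |Z0 ω| ^ q) (τ ω)) ∂P := by
        refine lintegral_congr fun ω => ?_
        congr 1
        show (↑‖Y (τ ω)‖₊ : ℝ≥0∞) ^ q' = ENNReal.ofReal (|Z0 (τ ω)| ^ q)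
        rw [← hYq' (τ ω), ← ENNReal.ofReal_rpow_of_nonneg (abs_nonneg _) hq'0.le,
          ← Real.norm_eq_abs, ofReal_norm_eq_coe_nnnorm]
      rw [hGeq, hAdef]
      exact girsanov_lintegral_le P τ hτ ρ hρm hρ0 hρint hGirsanov _
        (hZ0meas.abs.pow_const q) (fun ω => Real.rpow_nonneg (abs_nonneg _) _) hIq
    have main : N ^ q ≤ (M * R ^ (1/q)) * N ^ (q - 1) := by
      have step : N ^ q ≤ (M ^ q * R) ^ (1/q) * (N ^ q) ^ (1/q') := by
        calc N ^ q = ENNReal.ofReal A := hNq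
          _ ≤ F ^ (1/q) * G ^ (1/q') := le_trans L1 L2
          _ ≤ (M ^ q * R) ^ (1/q) * (ENNReal.ofReal A) ^ (1/q') := by
              gcongr <;> positivity
          _ = (M ^ q * R) ^ (1/q) * (N ^ q) ^ (1/q') := by rw [hNq]
      refine step.trans (le_of_eq ?_)
      rw [ENNReal.mul_rpow_of_nonneg _ _ (by positivity : (0:ℝ) ≤ 1/q),
        ← ENNReal.rpow_mul, ← ENNReal.rpow_mul,
        show q * (1/q) = 1 from by field_simp, ENNReal.rpow_one,
        show q * (1/q') = q - 1 from by rw [mul_one_div]; exact hqc.div_conj_eq_sub_one]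
    by_cases hN0 : N = 0
    · rw [hN0]
      simp only [ENNReal.toReal_zero]
      positivity
    · have h1ne0 : N ^ (q - 1) ≠ 0 := by
        simp only [ne_eq, ENNReal.rpow_eq_zero_iff, not_or, not_and]
        exact ⟨fun h => absurd h hN0, fun h => absurd h hNne⟩
      have h1net : N ^ (q - 1) ≠ ⊤ := ENNReal.rpow_ne_top_of_nonneg hq1.le hNne
      have hNsplit : N ^ q = N * N ^ (q - 1) := by
        rw [show q = 1 + (q - 1) from by ring,
          ENNReal.rpow_add_of_nonneg _ _ one_pos.le hq1.le, ENNReal.rpow_one]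
        ring_nf
      rw [hNsplit] at main
      have hNle : N ≤ M * R ^ (1/q) := (ENNReal.mul_le_mul_iff_left h1ne0 h1net).mp main
      have hfin : M * R ^ (1/q) ≠ ⊤ :=
        ENNReal.mul_ne_top hMne (ENNReal.rpow_ne_top_of_nonneg (by positivity) hRne)
      have hto := ENNReal.toReal_mono hfin hNle
      rw [ENNReal.toReal_mul, ← ENNReal.toReal_rpow] at hto
      exact hto.trans_eq (mul_comm _ _)
end

section
/- Let q ∈ (1, ∞) and let φ : ℝ → ℝ be a convex function. In the abstract Girsanov setting, if X ∈ L^r(P) for some r > q and φ∘X ∈ L^{r'}(P) for some r' > q, then φ(Z(X)) ≤ Z(φ∘X) P-a.e. (Jensen's inequality for the operator Z). -/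
open MeasureTheory

/-- Existence of a subgradient for a convex function on ℝ. -/
lemma aux_exists_subgradient (φ : ℝ → ℝ) (hφ : ConvexOn ℝ Set.univ φ) (t : ℝ) :
    ∃ a : ℝ, ∀ x : ℝ, φ t + a * (x - t) ≤ φ x := by
  set S : Set ℝ := {m : ℝ | ∃ s : ℝ, t < s ∧ m = (φ s - φ t) / (s - t)} with hSdef
  have hne : S.Nonempty := ⟨(φ (t+1) - φ t) / (t + 1 - t), t + 1, by linarith, rfl⟩
  have hbdd : BddBelow S := by
    refine ⟨(φ t - φ (t-1)) / (t - (t-1)), ?_⟩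
    rintro m ⟨s, hs, rfl⟩
    exact hφ.slope_mono_adjacent (Set.mem_univ (t-1)) (Set.mem_univ s) (by linarith) hs
  refine ⟨sInf S, fun x => ?_⟩
  rcases lt_trichotomy x t with hx | hx | hx
  · have hlb : (φ t - φ x) / (t - x) ≤ sInf S := by
      refine le_csInf hne ?_
      rintro m ⟨s, hs, rfl⟩
      exact hφ.slope_mono_adjacent (Set.mem_univ x) (Set.mem_univ s) hx hs
    have htx : (0:ℝ) < t - x := by linarith
    have := (div_le_iff₀ htx).mp hlb
    nlinarith [this]
  · simp [hx]
  · have hub : sInf S ≤ (φ x - φ t) / (x - t) := csInf_le hbdd ⟨x, hx, rfl⟩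
    have hxt : (0:ℝ) < x - t := by linarith
    have := (le_div_iff₀ hxt).mp hub
    linarith

/-- Pointwise Jensen via countably many supporting lines. -/
lemma aux_jensen_pointwise (φ : ℝ → ℝ) (hφ : ConvexOn ℝ Set.univ φ)
    (A : ℚ → ℝ) (hA : ∀ t : ℚ, ∀ y : ℝ, φ t + A t * (y - t) ≤ φ y)
    (x c : ℝ) (h : ∀ t : ℚ, φ t + A t * (x - t) ≤ c) : φ x ≤ c := by
  have hcont : Continuous φ := by
    rw [← continuousOn_univ]
    exact hφ.continuousOn isOpen_univ
  obtain ⟨K, hK⟩ := (isCompact_Icc.bddAbove_image (hcont.continuousOn (s := Set.Icc (x-2) (x+2))))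
  obtain ⟨m, hm⟩ := (isCompact_Icc.bddBelow_image (hcont.continuousOn (s := Set.Icc (x-2) (x+2))))
  have hKx : ∀ y ∈ Set.Icc (x-2) (x+2), φ y ≤ K := fun y hy => hK (Set.mem_image_of_mem φ hy)
  have hmx : ∀ y ∈ Set.Icc (x-2) (x+2), m ≤ φ y := fun y hy => hm (Set.mem_image_of_mem φ hy)
  set M : ℝ := K - m with hMdef
  have hM0 : 0 ≤ M := by
    have h1 := hKx x (by constructor <;> linarith)
    have h2 := hmx x (by constructor <;> linarith)
    linarith
  have hAbd : ∀ t : ℚ, (t:ℝ) ∈ Set.Icc (x-1) (x+1) → |A t| ≤ M := by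
    intro t ht
    obtain ⟨ht1, ht2⟩ := ht
    have h1 := hA t (x+2)
    have h2 := hA t (x-2)
    have hφt1 := hKx (x+2) (by constructor <;> linarith)
    have hφt2 := hKx (x-2) (by constructor <;> linarith)
    have hφt3 := hmx t (by constructor <;> linarith)
    rw [abs_le]
    constructor
    · nlinarith
    · nlinarith
  refine le_of_forall_pos_le_add (fun ε hε => ?_)
  have hε2 : (0:ℝ) < ε / 2 := by linarith
  obtain ⟨δ, hδ0, hδ⟩ := Metric.continuous_iff.mp hcont x (ε/2) hε2
  set η : ℝ := min 1 (min δ (ε / (2 * (M + 1)))) with hηdef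
  have hη0 : 0 < η := by
    refine lt_min one_pos (lt_min hδ0 ?_)
    positivity
  obtain ⟨t, ht1, ht2⟩ := exists_rat_btwn (show x < x + η by linarith)
  have htx1 : (t:ℝ) - x < η := by linarith
  have htx0 : 0 < (t:ℝ) - x := by linarith
  have hdist : dist (t:ℝ) x < δ := by
    rw [Real.dist_eq, abs_of_pos htx0]
    exact lt_of_lt_of_le htx1 (le_trans (min_le_right _ _) (min_le_left _ _))
  have hφtx : |φ t - φ x| < ε/2 := by
    have := hδ (t:ℝ) hdist
    rwa [Real.dist_eq] at this
  have hAt : |A t| ≤ M := by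
    refine hAbd t ⟨by linarith [le_trans htx1.le (min_le_left 1 (min δ (ε / (2 * (M + 1)))))], ?_⟩
    have : (t:ℝ) - x < 1 := lt_of_lt_of_le htx1 (min_le_left _ _)
    linarith
  have hkey := h t
  have habs : |A t * (x - (t:ℝ))| ≤ M * (ε / (2 * (M + 1))) := by
    rw [abs_mul]
    have h1 : |x - (t:ℝ)| ≤ ε / (2 * (M + 1)) := by
      rw [abs_sub_comm, abs_of_pos htx0]
      exact le_trans htx1.le (le_trans (min_le_right _ _) (min_le_right _ _))
    have := mul_le_mul hAt h1 (abs_nonneg _) hM0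
    linarith [this]
  have hfrac : M * (ε / (2 * (M + 1))) ≤ ε / 2 := by
    have he : M * (ε / (2 * (M + 1))) = (M * ε) / (2 * (M + 1)) := by ring
    rw [he, div_le_div_iff₀ (by positivity) (by norm_num : (0:ℝ) < 2)]
    nlinarith
  have h1 : φ x - ε/2 < φ t := by
    have := abs_lt.mp hφtx
    linarith [this.1]
  have h2 : A t * (x - (t:ℝ)) ≥ -(ε/2) := by
    have := neg_abs_le (A t * (x - (t:ℝ)))
    linarith [habs, hfrac]
  linarith

/-- Jensen's inequality for the operator `Z`: In the abstract Girsanov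
setting, if `φ : ℝ → ℝ` is convex, `X ∈ L^r(P)` for some `r > q` and
`φ∘X ∈ L^{r'}(P)` for some `r' > q`, then `φ(Z(X)) ≤ Z(φ∘X)` `P`-a.e. -/
theorem girsanov_operator_jensen
    {Ω : Type*} [MeasurableSpace Ω] (P : Measure Ω) [IsProbabilityMeasure P]
    (τ : Ω → Ω) (hτ : Measurable τ)
    (ρ : Ω → ℝ) (hρm : Measurable ρ) (hρ0 : 0 ≤ᵐ[P] ρ)
    (hρLp : ∀ r : ℝ, 1 ≤ r → MemLp ρ (ENNReal.ofReal r) P)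
    (hGirsanov : ∀ Y : Ω → ℝ, Integrable Y P →
      ∫ ω, Y (τ ω) * ρ ω ∂P = ∫ ω, Y ω ∂P)
    (q r r' : ℝ) (hq : 1 < q) (hr : q < r) (hr' : q < r')
    (φ : ℝ → ℝ) (hφ : ConvexOn ℝ Set.univ φ)
    (X : Ω → ℝ)
    (hX : MemLp X (ENNReal.ofReal r) P)
    (hφX : MemLp (fun ω => φ (X ω)) (ENNReal.ofReal r') P)
    (ZX ZφX : Ω → ℝ)
    (hZX : MemLp ZX (ENNReal.ofReal q) P)
    (hZφX : MemLp ZφX (ENNReal.ofReal q) P)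
    (hZXdual : ∀ Y : Ω → ℝ, MemLp Y (ENNReal.ofReal (q / (q - 1))) P →
      ∫ ω, ZX ω * Y ω ∂P = ∫ ω, X ω * ρ ω * Y (τ ω) ∂P)
    (hZφXdual : ∀ Y : Ω → ℝ, MemLp Y (ENNReal.ofReal (q / (q - 1))) P →
      ∫ ω, ZφX ω * Y ω ∂P = ∫ ω, φ (X ω) * ρ ω * Y (τ ω) ∂P) :
    (fun ω => φ (ZX ω)) ≤ᵐ[P] ZφX := by
  have hq1 : (1:ENNReal) ≤ ENNReal.ofReal q := ENNReal.one_le_ofReal.mpr hq.le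
  have hq' : 1 ≤ q / (q - 1) := by
    rw [le_div_iff₀ (by linarith)]; linarith
  have iZX : Integrable ZX P := hZX.integrable hq1
  have iZφX : Integrable ZφX P := hZφX.integrable hq1
  have iρ : Integrable ρ P := (hρLp 1 le_rfl).integrable (by simp)
  -- Hölder: F ∈ L^s, s > 1, gives F·ρ integrable
  have hmul : ∀ (s : ℝ), 1 < s → ∀ (F : Ω → ℝ), MemLp F (ENNReal.ofReal s) P →
      Integrable (fun ω => F ω * ρ ω) P := by
    intro s hs F hF
    have hs0 : (0:ℝ) < s := by linarith
    have hs1 : (0:ℝ) < s - 1 := by linarith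
    have hconj : (0:ℝ) < s / (s-1) := by positivity
    have h1 : 1 ≤ s / (s - 1) := by rw [le_div_iff₀ hs1]; linarith
    have hρs := hρLp (s/(s-1)) h1
    have hsum : (1:ENNReal) / 1 = 1 / ENNReal.ofReal (s/(s-1)) + 1 / ENNReal.ofReal s := by
      rw [one_div, one_div, one_div, ← ENNReal.ofReal_inv_of_pos hconj,
        ← ENNReal.ofReal_inv_of_pos hs0,
        ← ENNReal.ofReal_add (by positivity) (by positivity), inv_one, ← ENNReal.ofReal_one]
      congr 1
      field_simp
      ring
    have hsmul : MemLp (ρ • F) 1 P := hF.smul hρs (hpqr := ⟨by simpa only [one_div] using hsum.symm⟩)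
    have h2 : Integrable (fun ω => ρ ω * F ω) P := by
      have := memLp_one_iff_integrable.mp hsmul
      exact this
    exact h2.congr (by filter_upwards with ω; ring_nf)
  have hXρ : Integrable (fun ω => X ω * ρ ω) P := hmul r (by linarith) X hX
  have hφXρ : Integrable (fun ω => φ (X ω) * ρ ω) P := hmul r' (by linarith) _ hφX
  -- Key positivity step: affine minorants transfer to Z
  have key : ∀ a b : ℝ, (∀ x : ℝ, a * x + b ≤ φ x) →
      ∀ᵐ ω ∂P, a * ZX ω + b ≤ ZφX ω := by
    intro a b hab
    set f := hZX.1.mk ZX with hfdef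
    have hf : StronglyMeasurable f := hZX.1.stronglyMeasurable_mk
    have hfe : ZX =ᵐ[P] f := hZX.1.ae_eq_mk
    set g := hZφX.1.mk ZφX with hgdef
    have hg : StronglyMeasurable g := hZφX.1.stronglyMeasurable_mk
    have hge : ZφX =ᵐ[P] g := hZφX.1.ae_eq_mk
    set S : Set Ω := {ω | g ω < a * f ω + b} with hSdef
    have hS : MeasurableSet S :=
      measurableSet_lt hg.measurable ((hf.measurable.const_mul a).add_const b)
    set Y : Ω → ℝ := S.indicator (fun _ => (1:ℝ)) with hYdef
    have hYmem : MemLp Y (ENNReal.ofReal (q / (q-1))) P := (memLp_const 1).indicator hS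
    have hYint : Integrable Y P := hYmem.integrable (ENNReal.one_le_ofReal.mpr hq')
    set T : Set Ω := τ ⁻¹' S with hTdef
    have hT : MeasurableSet T := hτ hS
    have hYmul : ∀ F : Ω → ℝ, (fun ω => F ω * Y ω) = S.indicator F := by
      intro F; funext ω; by_cases h : ω ∈ S
      · simp [hYdef, Set.indicator_of_mem h]
      · simp [hYdef, Set.indicator_of_notMem h]
    have hYτmul : ∀ F : Ω → ℝ, (fun ω => F ω * Y (τ ω)) = T.indicator F := by
      intro F; funext ω; by_cases h : τ ω ∈ S
      · simp [hYdef, hTdef, Set.indicator_of_mem, h, Set.mem_preimage]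
      · simp [hYdef, hTdef, Set.indicator_of_notMem, h, Set.mem_preimage]
    have h1 : ∫ ω in S, ZX ω ∂P = ∫ ω in T, X ω * ρ ω ∂P := by
      calc ∫ ω in S, ZX ω ∂P = ∫ ω, S.indicator ZX ω ∂P := (integral_indicator hS).symm
        _ = ∫ ω, ZX ω * Y ω ∂P := by rw [← hYmul ZX]
        _ = ∫ ω, X ω * ρ ω * Y (τ ω) ∂P := hZXdual Y hYmem
        _ = ∫ ω, T.indicator (fun ω => X ω * ρ ω) ω ∂P := by
            rw [← hYτmul (fun ω => X ω * ρ ω)]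
        _ = ∫ ω in T, X ω * ρ ω ∂P := integral_indicator hT
    have h2 : ∫ ω in S, ZφX ω ∂P = ∫ ω in T, φ (X ω) * ρ ω ∂P := by
      calc ∫ ω in S, ZφX ω ∂P = ∫ ω, S.indicator ZφX ω ∂P := (integral_indicator hS).symm
        _ = ∫ ω, ZφX ω * Y ω ∂P := by rw [← hYmul ZφX]
        _ = ∫ ω, φ (X ω) * ρ ω * Y (τ ω) ∂P := hZφXdual Y hYmem
        _ = ∫ ω, T.indicator (fun ω => φ (X ω) * ρ ω) ω ∂P := by
            rw [← hYτmul (fun ω => φ (X ω) * ρ ω)]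
        _ = ∫ ω in T, φ (X ω) * ρ ω ∂P := integral_indicator hT
    have h3 : ∫ ω in T, ρ ω ∂P = (P S).toReal := by
      have e : (fun ω => Y (τ ω) * ρ ω) = T.indicator ρ := by
        funext ω; by_cases h : τ ω ∈ S
        · simp [hYdef, hTdef, Set.indicator_of_mem, h, Set.mem_preimage]
        · simp [hYdef, hTdef, Set.indicator_of_notMem, h, Set.mem_preimage]
      have hg1 := hGirsanov Y hYint
      rw [e] at hg1
      have e2 : ∫ ω, Y ω ∂P = (P S).toReal := by
        rw [hYdef, integral_indicator hS]
        simp [measureReal_def]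
      calc ∫ ω in T, ρ ω ∂P = ∫ ω, T.indicator ρ ω ∂P := (integral_indicator hT).symm
        _ = ∫ ω, Y ω ∂P := hg1
        _ = (P S).toReal := e2
    -- LHS expansion
    have i1 : Integrable ZφX (P.restrict S) := iZφX.integrableOn
    have i2 : Integrable (fun ω => a * ZX ω) (P.restrict S) := iZX.integrableOn.const_mul a
    have i3 : Integrable (fun _ : Ω => b) (P.restrict S) := integrable_const b
    have i23 : Integrable (fun ω => a * ZX ω + b) (P.restrict S) := i2.add i3
    have hL : ∫ ω in S, (ZφX ω - (a * ZX ω + b)) ∂P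
        = ∫ ω in S, ZφX ω ∂P - (a * ∫ ω in S, ZX ω ∂P + b * (P S).toReal) := by
      rw [integral_sub i1 i23, integral_add i2 i3, integral_const_mul,
        integral_const]
      simp [Measure.restrict_apply_univ, smul_eq_mul, mul_comm, measureReal_def]
    -- RHS expansion
    have j1 : Integrable (fun ω => φ (X ω) * ρ ω) (P.restrict T) := hφXρ.integrableOn
    have j2 : Integrable (fun ω => a * (X ω * ρ ω)) (P.restrict T) :=
      hXρ.integrableOn.const_mul a
    have j3 : Integrable (fun ω => b * ρ ω) (P.restrict T) := iρ.integrableOn.const_mul b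
    have hR : ∫ ω in T, (φ (X ω) - (a * X ω + b)) * ρ ω ∂P
        = ∫ ω in T, φ (X ω) * ρ ω ∂P
          - (a * ∫ ω in T, X ω * ρ ω ∂P + b * ∫ ω in T, ρ ω ∂P) := by
      have e : (fun ω => (φ (X ω) - (a * X ω + b)) * ρ ω)
          = fun ω => φ (X ω) * ρ ω - (a * (X ω * ρ ω) + b * ρ ω) := by
        funext ω; ring
      have j23 : Integrable (fun ω => a * (X ω * ρ ω) + b * ρ ω) (P.restrict T) := j2.add j3
      rw [e, integral_sub j1 j23, integral_add j2 j3, integral_const_mul,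
        integral_const_mul]
    have hpos : 0 ≤ ∫ ω in T, (φ (X ω) - (a * X ω + b)) * ρ ω ∂P := by
      apply integral_nonneg_of_ae
      filter_upwards [ae_restrict_of_ae hρ0] with ω hρω
      have := hab (X ω)
      exact mul_nonneg (by linarith) hρω
    have hfinal : 0 ≤ ∫ ω in S, (ZφX ω - (a * ZX ω + b)) ∂P := by
      rw [hL, h1, h2, ← h3]
      rw [hR] at hpos
      linarith
    -- switch to measurable representatives
    have hcong : ∫ ω in S, (ZφX ω - (a * ZX ω + b)) ∂P
        = ∫ ω in S, (g ω - (a * f ω + b)) ∂P := by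
      apply integral_congr_ae
      filter_upwards [ae_restrict_of_ae hfe, ae_restrict_of_ae hge] with ω e1 e2
      rw [e1, e2]
    set h : Ω → ℝ := fun ω => (a * f ω + b) - g ω with hhdef
    have hfint : Integrable f P := iZX.congr hfe
    have hgint : Integrable g P := iZφX.congr hge
    have hint : Integrable h (P.restrict S) :=
      ((hfint.integrableOn.const_mul a).add (integrable_const b)).sub hgint.integrableOn
    have hnn : 0 ≤ᵐ[P.restrict S] h := by
      rw [Filter.EventuallyLE, ae_restrict_iff' hS]
      filter_upwards with ω hω
      have : g ω < a * f ω + b := hω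
      simp only [hhdef, Pi.zero_apply]
      linarith
    have hneg : ∫ ω in S, h ω ∂P = - ∫ ω in S, (g ω - (a * f ω + b)) ∂P := by
      rw [← integral_neg]
      congr 1; funext ω; simp only [hhdef]; ring
    have hzero : ∫ ω in S, h ω ∂P = 0 := by
      refine le_antisymm ?_ (integral_nonneg_of_ae hnn)
      rw [hneg]
      rw [hcong] at hfinal
      linarith
    have hae0 : h =ᵐ[P.restrict S] 0 := (integral_eq_zero_iff_of_nonneg_ae hnn hint).mp hzero
    have hhm : Measurable h :=
      ((hf.measurable.const_mul a).add_const b).sub hg.measurable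
    have hS0 : P S = 0 := by
      have hr0 : P.restrict S {ω | ¬ h ω = 0} = 0 := ae_iff.mp hae0
      have hms : MeasurableSet {ω | ¬ h ω = 0} :=
        (hhm (measurableSet_singleton (0:ℝ))).compl
      rw [Measure.restrict_apply hms] at hr0
      have hsub : S ⊆ {ω | ¬ h ω = 0} ∩ S := by
        intro ω hω
        have : g ω < a * f ω + b := hω
        exact ⟨by simp only [hhdef, Set.mem_setOf_eq]; intro hc; linarith, hω⟩
      exact le_antisymm (hr0 ▸ measure_mono hsub) (by simp)
    have hnotS : ∀ᵐ ω ∂P, ω ∉ S := by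
      rw [ae_iff]
      simpa using hS0
    filter_upwards [hnotS, hfe, hge] with ω hωS e1 e2
    rw [e1, e2]
    simp only [hSdef, Set.mem_setOf_eq, not_lt] at hωS
    exact hωS
  -- assemble with countably many supporting lines
  choose A hA using fun t : ℚ => aux_exists_subgradient φ hφ (t : ℝ)
  have hall : ∀ᵐ ω ∂P, ∀ t : ℚ, A t * ZX ω + (φ t - A t * t) ≤ ZφX ω := by
    rw [ae_all_iff]
    intro t
    apply key
    intro x
    have h0 := hA t x
    have e : φ (t:ℝ) + A t * (x - (t:ℝ)) = A t * x + (φ (t:ℝ) - A t * (t:ℝ)) := by ring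
    linarith [e ▸ h0]
  filter_upwards [hall] with ω hω
  refine aux_jensen_pointwise φ hφ A hA (ZX ω) (ZφX ω) (fun t => ?_)
  have e : φ (t:ℝ) + A t * (ZX ω - (t:ℝ)) = A t * ZX ω + (φ (t:ℝ) - A t * (t:ℝ)) := by ring
  rw [e]
  exact hω t
end

section
/- Let q ∈ (1, ∞). In the abstract Girsanov setting, for every X ∈ L^r(P) with r > q and every U ∈ L^∞(P), one has U·Z(X) = Z(X·(U∘τ)) P-a.e. (note that X·(U∘τ) ∈ L^r(P), so the right-hand side is well defined). -/
open MeasureTheory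

/-- In the abstract Girsanov setting, for every `X ∈ L^r(P)` with
`r > q` and every `U ∈ L^∞(P)`, one has `U·Z(X) = Z(X·(U∘τ))` `P`-a.e. -/
theorem girsanov_operator_module_property
    {Ω : Type*} [MeasurableSpace Ω] (P : Measure Ω) [IsProbabilityMeasure P]
    (τ : Ω → Ω) (hτ : Measurable τ)
    (ρ : Ω → ℝ) (hρm : Measurable ρ) (hρ0 : 0 ≤ᵐ[P] ρ)
    (hρLp : ∀ r : ℝ, 1 ≤ r → MemLp ρ (ENNReal.ofReal r) P)
    (hGirsanov : ∀ Y : Ω → ℝ, Integrable Y P →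
      ∫ ω, Y (τ ω) * ρ ω ∂P = ∫ ω, Y ω ∂P)
    (q r : ℝ) (hq : 1 < q) (hr : q < r)
    (X : Ω → ℝ) (hX : MemLp X (ENNReal.ofReal r) P)
    (U : Ω → ℝ) (hU : MemLp U ⊤ P)
    (ZX ZXU : Ω → ℝ)
    (hZX : MemLp ZX (ENNReal.ofReal q) P)
    (hZXU : MemLp ZXU (ENNReal.ofReal q) P)
    (hZXdual : ∀ Y : Ω → ℝ, MemLp Y (ENNReal.ofReal (q / (q - 1))) P →
      ∫ ω, ZX ω * Y ω ∂P = ∫ ω, X ω * ρ ω * Y (τ ω) ∂P)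
    (hZXUdual : ∀ Y : Ω → ℝ, MemLp Y (ENNReal.ofReal (q / (q - 1))) P →
      ∫ ω, ZXU ω * Y ω ∂P = ∫ ω, (X ω * U (τ ω)) * ρ ω * Y (τ ω) ∂P) :
    (fun ω => U ω * ZX ω) =ᵐ[P] ZXU := by

  have hq' : (1:ℝ) ≤ q / (q - 1) := by
    rw [le_div_iff₀ (by linarith)]; linarith
  -- U • ZX ∈ L^q, hence integrable
  have hUZX : MemLp (fun ω => U ω * ZX ω) (ENNReal.ofReal q) P := by
    have := hZX.smul (r := ENNReal.ofReal q) hU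
    exact this
  have h1q : (1 : ENNReal) ≤ ENNReal.ofReal q := by
    rw [ENNReal.one_le_ofReal]; linarith
  have hintUZX : Integrable (fun ω => U ω * ZX ω) P := hUZX.integrable h1q
  have hintZXU : Integrable ZXU P := hZXU.integrable h1q
  have hintf : Integrable (fun ω => U ω * ZX ω - ZXU ω) P := hintUZX.sub hintZXU
  have key : ∀ s : Set Ω, MeasurableSet s →
      ∫ ω in s, (U ω * ZX ω - ZXU ω) ∂P = 0 := by
    intro s hs
    set Y : Ω → ℝ := s.indicator (fun _ => (1:ℝ)) with hYdef
    have hY : MemLp Y (ENNReal.ofReal (q / (q - 1))) P :=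
      (memLp_const (1:ℝ)).indicator hs
    have hUY : MemLp (fun ω => U ω * Y ω) (ENNReal.ofReal (q / (q - 1))) P := by
      have := hY.smul (r := ENNReal.ofReal (q / (q - 1))) hU
      exact this
    have e1 : ∫ ω, ZX ω * (U ω * Y ω) ∂P
        = ∫ ω, X ω * ρ ω * (U (τ ω) * Y (τ ω)) ∂P := hZXdual _ hUY
    have e2 : ∫ ω, ZXU ω * Y ω ∂P
        = ∫ ω, (X ω * U (τ ω)) * ρ ω * Y (τ ω) ∂P := hZXUdual _ hY
    have e3 : ∫ ω, ZX ω * (U ω * Y ω) ∂P = ∫ ω, ZXU ω * Y ω ∂P := by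
      rw [e1, e2]; congr 1; funext ω; ring
    have i1 : ∫ ω, ZX ω * (U ω * Y ω) ∂P = ∫ ω in s, U ω * ZX ω ∂P := by
      have : (fun ω => ZX ω * (U ω * Y ω))
          = s.indicator (fun ω => U ω * ZX ω) := by
        funext ω
        by_cases h : ω ∈ s <;>
          simp [hYdef, Set.indicator_of_mem, Set.indicator_of_notMem, h, mul_comm]
      rw [this, integral_indicator hs]
    have i2 : ∫ ω, ZXU ω * Y ω ∂P = ∫ ω in s, ZXU ω ∂P := by
      have : (fun ω => ZXU ω * Y ω) = s.indicator ZXU := by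
        funext ω
        by_cases h : ω ∈ s <;>
          simp [hYdef, Set.indicator_of_mem, Set.indicator_of_notMem, h]
      rw [this, integral_indicator hs]
    rw [integral_sub (hintUZX.integrableOn) (hintZXU.integrableOn), ← i1, ← i2, e3,
      sub_self]
  have h0 : (fun ω => U ω * ZX ω - ZXU ω) =ᵐ[P] 0 :=
    ae_eq_zero_of_forall_setIntegral_eq_of_sigmaFinite
      (fun s hs _ => hintf.integrableOn)
      (fun s hs _ => key s hs)
  filter_upwards [h0] with ω hω
  have : U ω * ZX ω - ZXU ω = 0 := hω
  linarith
end

section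
/- Let (Ω, 𝓕, μ) be a probability space, let p, q ∈ [1, ∞), and let T : L^p(μ) → L^q(μ) be a linear map that is monotone (if X ≤ X' μ-a.e. then T X ≤ T X' μ-a.e.) and unital (T 1 = 1, where 1 is the constant function one). Then for every convex function φ : ℝ → ℝ and every X ∈ L^p(μ) with φ∘X ∈ L^p(μ), one has φ(T X) ≤ T(φ∘X) μ-a.e. -/
open MeasureTheory
open scoped ENNReal

/-- A convex function on `ℝ` has a supporting line at every point. -/
lemma convex_exists_supporting_line {φ : ℝ → ℝ} (hφ : ConvexOn ℝ Set.univ φ) (y : ℝ) :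
    ∃ m : ℝ, ∀ x, φ y + m * (x - y) ≤ φ x := by
  set S : Set ℝ := {s : ℝ | ∃ x, x < y ∧ s = (φ y - φ x) / (y - x)} with hS
  have hne : S.Nonempty := ⟨(φ y - φ (y - 1)) / (y - (y - 1)), y - 1, by linarith, rfl⟩
  have hbdd : BddAbove S := by
    refine ⟨(φ (y + 1) - φ y) / (y + 1 - y), ?_⟩
    rintro s ⟨x, hx, rfl⟩
    exact hφ.slope_mono_adjacent trivial trivial hx (by linarith)
  refine ⟨sSup S, fun x => ?_⟩
  rcases lt_trichotomy x y with hxy | rfl | hxy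
  · have h1 : (φ y - φ x) / (y - x) ≤ sSup S := le_csSup hbdd ⟨x, hxy, rfl⟩
    have h2 : φ y - φ x ≤ sSup S * (y - x) := by
      rw [div_le_iff₀ (by linarith)] at h1; linarith
    nlinarith
  · simp
  · have h1 : sSup S ≤ (φ x - φ y) / (x - y) := by
      apply csSup_le hne
      rintro s ⟨x', hx', rfl⟩
      exact hφ.slope_mono_adjacent trivial trivial hx' hxy
    have h2 : sSup S * (x - y) ≤ φ x - φ y := by
      rw [le_div_iff₀ (by linarith)] at h1; linarith
    linarith

/-- If supporting lines at all rational points are bounded by `c` at the point `z`,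
then `φ z ≤ c`. -/
lemma convex_le_of_rational_support {φ : ℝ → ℝ} (hφ : ConvexOn ℝ Set.univ φ)
    (m : ℚ → ℝ) (hm : ∀ (r : ℚ) (x : ℝ), φ r + m r * (x - r) ≤ φ x)
    (z c : ℝ) (h : ∀ r : ℚ, φ (r : ℝ) + m r * (z - r) ≤ c) : φ z ≤ c := by
  have hc : Continuous φ := hφ.locallyLipschitz.continuous
  obtain ⟨M, hM⟩ : ∃ M, ∀ x ∈ Set.Icc (z - 2) (z + 2), |φ x| ≤ M := by
    obtain ⟨M, hM⟩ := (isCompact_Icc (a := z - 2) (b := z + 2)).exists_bound_of_continuousOn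
      hc.continuousOn
    exact ⟨M, fun x hx => hM x hx⟩
  have hM0 : 0 ≤ M := le_trans (abs_nonneg _) (hM z (by constructor <;> linarith))
  -- bound on slopes of supporting lines at rationals near `z`
  have hmb : ∀ r : ℚ, |(r : ℝ) - z| ≤ 1 → |m r| ≤ 2 * M := by
    intro r hr
    rw [abs_le] at hr
    have h1 : φ r + m r * (((r : ℝ) + 1) - r) ≤ φ (r + 1) := hm r ((r : ℝ) + 1)
    have h2 : φ r + m r * (((r : ℝ) - 1) - r) ≤ φ (r - 1) := hm r ((r : ℝ) - 1)
    have b1 : |φ (r : ℝ)| ≤ M := hM _ (by constructor <;> linarith)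
    have b2 : |φ ((r : ℝ) + 1)| ≤ M := hM _ (by constructor <;> linarith)
    have b3 : |φ ((r : ℝ) - 1)| ≤ M := hM _ (by constructor <;> linarith)
    rw [abs_le] at b1 b2 b3 ⊢
    constructor <;> nlinarith
  refine le_of_forall_pos_le_add fun ε hε => ?_
  obtain ⟨δ, hδ0, hδ⟩ := Metric.continuousAt_iff.mp hc.continuousAt (ε := ε / 2) (by linarith)
  set δ' : ℝ := min δ (min 1 (ε / (2 * (2 * M + 1)))) with hδ'
  have hδ'0 : 0 < δ' := by
    refine lt_min hδ0 (lt_min one_pos ?_)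
    positivity
  obtain ⟨r, hr1, hr2⟩ := exists_rat_btwn (show z - δ' < z by linarith)
  have hrz : |(r : ℝ) - z| < δ' := by rw [abs_lt]; constructor <;> linarith
  have hφr : |φ (r : ℝ) - φ z| < ε / 2 := by
    have := hδ (show dist (r : ℝ) z < δ by
      rw [Real.dist_eq]; exact lt_of_lt_of_le hrz (min_le_left _ _))
    rwa [Real.dist_eq] at this
  have hmr : |m r| ≤ 2 * M := hmb r (le_trans hrz.le (le_trans (min_le_right _ _)
    (min_le_left _ _)))
  have key : φ (r : ℝ) + m r * (z - r) ≤ c := h r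
  have habs : |m r * (z - r)| ≤ 2 * M * δ' := by
    rw [abs_mul]
    have : |z - (r : ℝ)| ≤ δ' := by rw [abs_sub_comm]; exact hrz.le
    exact mul_le_mul hmr this (abs_nonneg _) (by linarith)
  have hsmall : 2 * M * δ' ≤ ε / 2 := by
    have h1 : δ' ≤ ε / (2 * (2 * M + 1)) := le_trans (min_le_right _ _) (min_le_right _ _)
    have h2 : 2 * M * δ' ≤ 2 * M * (ε / (2 * (2 * M + 1))) := by nlinarith
    have h3 : 2 * M * (ε / (2 * (2 * M + 1))) ≤ ε / 2 := by
      rw [← mul_div_assoc, div_le_div_iff₀ (show (0:ℝ) < 2 * (2 * M + 1) by positivity)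
        (show (0:ℝ) < 2 by norm_num)]
      nlinarith
    linarith
  rw [abs_le] at habs
  rw [abs_lt] at hφr
  linarith

/-- operator Jensen inequality: Let `μ` be a probability measure,
`p, q ∈ [1, ∞)`, and let `T : L^p(μ) → L^q(μ)` be linear, monotone and unital
(`T 1 = 1`). Then for every convex `φ : ℝ → ℝ` and every `X ∈ L^p(μ)` with
`φ∘X ∈ L^p(μ)`, one has `φ(T X) ≤ T(φ∘X)` `μ`-a.e. -/
theorem operator_jensen_inequality
    {Ω : Type*} [MeasurableSpace Ω] (μ : Measure Ω) [IsProbabilityMeasure μ]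
    (p q : ℝ≥0∞) (hp1 : 1 ≤ p) (hp_top : p ≠ ∞) (hq1 : 1 ≤ q) (hq_top : q ≠ ∞)
    (T : Lp ℝ p μ →ₗ[ℝ] Lp ℝ q μ)
    (hTmono : ∀ X X' : Lp ℝ p μ, X ≤ X' → T X ≤ T X')
    (hTunital : T ((memLp_const (1 : ℝ)).toLp (fun _ : Ω => (1 : ℝ)))
      = (memLp_const (1 : ℝ)).toLp (fun _ : Ω => (1 : ℝ)))
    (φ : ℝ → ℝ) (hφ : ConvexOn ℝ Set.univ φ)
    (X : Lp ℝ p μ) (hφX : MemLp (fun ω => φ (X ω)) p μ) :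
    ∀ᵐ ω ∂μ, φ ((T X : Lp ℝ q μ) ω) ≤ (T (hφX.toLp (fun ω => φ (X ω))) : Lp ℝ q μ) ω := by
  -- supporting lines at rational points
  choose m hm using fun r : ℚ => convex_exists_supporting_line hφ (r : ℝ)
  set onep : Lp ℝ p μ := (memLp_const (1 : ℝ)).toLp (fun _ : Ω => (1 : ℝ)) with honep
  set G : Lp ℝ p μ := hφX.toLp (fun ω => φ (X ω)) with hG
  -- for each rational r, the affine image inequality
  have key : ∀ r : ℚ, ∀ᵐ ω ∂μ,
      φ (r : ℝ) + m r * ((T X : Lp ℝ q μ) ω - r) ≤ (T G : Lp ℝ q μ) ω := by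
    intro r
    set b : ℝ := φ (r : ℝ) - m r * (r : ℝ) with hb
    have hle : m r • X + b • onep ≤ G := by
      rw [← Lp.coeFn_le]
      filter_upwards [Lp.coeFn_add (m r • X) (b • onep), Lp.coeFn_smul (m r) X,
        Lp.coeFn_smul b onep, (memLp_const (1 : ℝ)).coeFn_toLp,
        hφX.coeFn_toLp] with ω h1 h2 h3 h4 h5
      have h3' : (b • onep) ω = b := by
        rw [h3]; simp only [Pi.smul_apply, smul_eq_mul]
        rw [h4]; ring
      rw [h1]
      simp only [Pi.add_apply]
      rw [h2, h3', h5]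
      simp only [Pi.smul_apply, smul_eq_mul]
      have := hm r (X ω)
      rw [hb]; ring_nf; ring_nf at this; linarith
    have hT : T (m r • X + b • onep) ≤ T G := hTmono _ _ hle
    have hTeq : T (m r • X + b • onep) = m r • T X + b •
        ((memLp_const (1 : ℝ)).toLp (fun _ : Ω => (1 : ℝ)) : Lp ℝ q μ) := by
      rw [map_add, T.map_smul, T.map_smul, honep, hTunital]
    rw [hTeq, ← Lp.coeFn_le] at hT
    filter_upwards [hT, Lp.coeFn_add (m r • T X)
        (b • ((memLp_const (1 : ℝ)).toLp (fun _ : Ω => (1 : ℝ)) : Lp ℝ q μ)),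
      Lp.coeFn_smul (m r) (T X),
      Lp.coeFn_smul b ((memLp_const (1 : ℝ)).toLp (fun _ : Ω => (1 : ℝ)) : Lp ℝ q μ),
      (memLp_const (1 : ℝ)).coeFn_toLp (μ := μ) (p := q)] with ω h1 h2 h3 h4 h5
    rw [h2] at h1
    simp only [Pi.add_apply] at h1
    rw [h3, h4] at h1
    simp only [Pi.smul_apply, smul_eq_mul] at h1
    rw [h5] at h1
    have : m r * (T X : Lp ℝ q μ) ω + b * 1 ≤ (T G : Lp ℝ q μ) ω := h1
    rw [hb] at this; ring_nf; ring_nf at this; linarith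
  rw [← ae_all_iff] at key
  filter_upwards [key] with ω hω
  exact convex_le_of_rational_support hφ m hm _ _ hω
end
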